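/- If G has diameter 2, then every local multiset resolving set of G has cardinality at least χ(G)/2, where χ(G) is the chromatic number of G. -/
import Mathlib


open SimpleGraph Finset

/-- The representation multiset of `u` with respect to `W`: the multiset of distances
from `u` to the vertices of `W`. -/
noncomputable def mrep {V : Type*} (G : SimpleGraph V) (u : V) (W : Finset V) : Multiset ℕ :=
  W.val.map fun w => G.dist u w

/-- `W` is a local multiset resolving set: adjacent vertices have distinct
representation multisets. -/
def IsLocalMultisetResolving {V : Type*} (G : SimpleGraph V) (W : Finset V) : Prop :=
  ∀ u v : V, G.Adj u v → mrep G u W ≠ mrep G v W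

private lemma count_sum_aux (s : Multiset ℕ) (h : ∀ x ∈ s, x ≤ 2) :
    s.count 0 + s.count 1 + s.count 2 = Multiset.card s := by
  induction s using Multiset.induction with
  | empty => simp
  | cons a s ih =>
    have ha : a ≤ 2 := h a (Multiset.mem_cons_self a s)
    have ih' := ih (fun x hx => h x (Multiset.mem_cons_of_mem hx))
    simp only [Multiset.count_cons, Multiset.card_cons]
    interval_cases a <;> simp <;> omega

private lemma multiset_eq_of_counts (s t : Multiset ℕ)
    (hcard : Multiset.card s = Multiset.card t)
    (hs : ∀ x ∈ s, x ≤ 2) (ht : ∀ x ∈ t, x ≤ 2)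
    (h0 : s.count 0 = t.count 0) (h1 : s.count 1 = t.count 1) : s = t := by
  have hss := count_sum_aux s hs
  have htt := count_sum_aux t ht
  ext k
  match k with
  | 0 => exact h0
  | 1 => exact h1
  | 2 => omega
  | (k+3) =>
    rw [Multiset.count_eq_zero_of_notMem, Multiset.count_eq_zero_of_notMem]
    · intro hk; exact absurd (ht _ hk) (by omega)
    · intro hk; exact absurd (hs _ hk) (by omega)

/-- If `G` has diameter 2, then every local multiset resolving set of `G` has
cardinality at least `χ(G)/2` (i.e. `χ(G) ≤ 2|W|`). -/
theorem stmt_18 {V : Type*} [Fintype V] (G : SimpleGraph V)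
    (hconn : G.Connected)
    (hdiam₁ : ∀ u v : V, G.dist u v ≤ 2) (hdiam₂ : ∃ u v : V, G.dist u v = 2) :
    ∀ W : Finset V, IsLocalMultisetResolving G W →
      G.chromaticNumber ≤ ((2 * W.card : ℕ) : ℕ∞) := by
  classical
  intro W hW
  -- there exists an edge
  obtain ⟨a, b, hab⟩ := hdiam₂
  have hadj : ∃ x y : V, G.Adj x y := by
    obtain ⟨p, -⟩ := exists_walk_of_dist_ne_zero (u := a) (v := b) (by rw [hab]; omega)
    cases p with
    | nil => rw [SimpleGraph.dist_self] at hab; omega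
    | cons h q => exact ⟨_, _, h⟩
  obtain ⟨x, y, hxy⟩ := hadj
  -- W is nonempty
  rcases W.eq_empty_or_nonempty with rfl | hWne
  · exact absurd rfl (hW x y hxy)
  set n := W.card with hn
  have hnpos : 0 < n := Finset.card_pos.mpr hWne
  -- basic facts about counts
  have hcard : ∀ u : V, Multiset.card (mrep G u W) = n := by
    intro u; simp [mrep, hn]
  have hle2 : ∀ u : V, ∀ x ∈ mrep G u W, x ≤ 2 := by
    intro u x hx
    obtain ⟨w, -, rfl⟩ := Multiset.mem_map.mp hx
    exact hdiam₁ u w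
  have hc0 : ∀ u : V, (mrep G u W).count 0 = if u ∈ W then 1 else 0 := by
    intro u
    rw [mrep, Multiset.count_map]
    have h1 : Multiset.filter (fun w => (0:ℕ) = G.dist u w) W.val
        = (W.filter (fun w => u = w)).val := by
      rw [Finset.filter_val]
      apply Multiset.filter_congr
      intro w _
      rw [eq_comm, hconn.dist_eq_zero_iff]
    rw [h1, ← Finset.card_def]
    have h2 : W.filter (fun w => u = w) = if u ∈ W then {u} else ∅ :=
      Finset.filter_eq W u
    rw [h2]
    split <;> simp
  have hsum : ∀ u : V, (mrep G u W).count 0 + (mrep G u W).count 1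
      + (mrep G u W).count 2 = n := by
    intro u; rw [count_sum_aux _ (hle2 u), hcard]
  -- the coloring function
  set f : V → ℕ := fun u => 2 * (mrep G u W).count 1 + (mrep G u W).count 0 with hf
  set c : V → ℕ := fun u => if f u = 0 then 0 else f u - 1 with hc
  have hc0le : ∀ u, (mrep G u W).count 0 ≤ 1 := by
    intro u; rw [hc0]; split <;> omega
  -- if u,v adjacent and v ∈ W then 1 ∈ mrep u
  have hmem1 : ∀ u v : V, G.Adj u v → v ∈ W → (mrep G u W).count 1 ≠ 0 := by
    intro u v huv hv
    have : (1 : ℕ) ∈ mrep G u W := by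
      rw [mrep, Multiset.mem_map]
      exact ⟨v, hv, dist_eq_one_iff_adj.mpr huv⟩
    simpa [Multiset.count_eq_zero] using this
  -- validity of the coloring
  have hvalid : ∀ u v : V, G.Adj u v → c u ≠ c v := by
    intro u v huv hcc
    by_cases hfeq : f u = f v
    · apply hW u v huv
      have hu := hc0le u
      have hv := hc0le v
      simp only [hf] at hfeq
      have h0 : (mrep G u W).count 0 = (mrep G v W).count 0 := by omega
      have h1 : (mrep G u W).count 1 = (mrep G v W).count 1 := by omega
      exact multiset_eq_of_counts _ _ (by rw [hcard, hcard]) (hle2 u) (hle2 v) h0 h1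
    · -- one of f u, f v is 0, the other is 1
      simp only [hc] at hcc
      have hcase : (f u = 0 ∧ f v = 1) ∨ (f v = 0 ∧ f u = 1) := by
        split_ifs at hcc <;> omega
      rcases hcase with ⟨hu0, hv1⟩ | ⟨hv0, hu1⟩
      · have hv0' : (mrep G v W).count 0 = 1 := by
          have := hc0le v; simp only [hf] at hv1; omega
        have hvW : v ∈ W := by
          by_contra h; rw [hc0 v, if_neg h] at hv0'; omega
        have hzero : (mrep G u W).count 1 = 0 := by
          simp only [hf] at hu0; omega
        exact hmem1 u v huv hvW hzero
      · have hu0' : (mrep G u W).count 0 = 1 := by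
          have := hc0le u; simp only [hf] at hu1; omega
        have huW : u ∈ W := by
          by_contra h; rw [hc0 u, if_neg h] at hu0'; omega
        have hzero : (mrep G v W).count 1 = 0 := by
          simp only [hf] at hv0; omega
        exact hmem1 v u huv.symm huW hzero
  -- boundedness
  have hbdd : ∀ u : V, c u < 2 * n := by
    intro u
    have h1 := hsum u
    have h2 := hc0le u
    simp only [hc, hf]
    split <;> omega
  have : G.Colorable (2 * n) := by
    rw [colorable_iff_exists_bdd_nat_coloring]
    exact ⟨Coloring.mk c (fun {u v} h => hvalid u v h), hbdd⟩
  exact this.chromaticNumber_le
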